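/- For every integer t ≥ 7, the 2-color Ramsey number R(S_t^2, S_t^2) equals 2t - 1; that is, every red/blue edge-coloring of the complete graph on 2t-1 vertices contains a monochromatic copy of S_t^2, and there exists a red/blue edge-coloring of the complete graph on 2t-2 vertices with no monochromatic copy of S_t^2. -/

import Mathlib

/-- `SGraph t r` is the graph `S_t^r`: a star `K_{1,t-1}` with center `0`
together with `r` independent edges `(1,2), (3,4), …, (2r-1,2r)` among the leaves. -/
def SGraph (t r : ℕ) : SimpleGraph (Fin t) :=
  SimpleGraph.fromRel fun a b =>
    a.val = 0 ∨ (b.val = a.val + 1 ∧ a.val % 2 = 1 ∧ b.val ≤ 2 * r)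

/-- A monochromatic copy of `H` in the edge-coloring `c` of the complete graph on `V`. -/
def HasMonoCopy {α V C : Type*} (H : SimpleGraph α) (c : Sym2 V → C) : Prop :=
  ∃ (f : α ↪ V) (col : C), ∀ a b : α, H.Adj a b → c s(f a, f b) = col

/-- A copy of `H` in the edge-coloring `c` all of whose edges get color `col`. -/
def HasMonoCopyCol {α V C : Type*} (H : SimpleGraph α) (c : Sym2 V → C) (col : C) : Prop :=
  ∃ f : α ↪ V, ∀ a b : α, H.Adj a b → c s(f a, f b) = col

/-- A rainbow triangle in the edge-coloring `c` of the complete graph on `V`. -/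
def HasRainbowTriangle {V C : Type*} (c : Sym2 V → C) : Prop :=
  ∃ x y z : V,
    c s(x, y) ≠ c s(y, z) ∧ c s(y, z) ≠ c s(x, z) ∧ c s(x, y) ≠ c s(x, z)

namespace RamseyAux

open Finset

variable {t : ℕ}

/-- neighborhood of `v` in color `k`. -/
def nbr {n : ℕ} (c : Sym2 (Fin n) → Fin 2) (k : Fin 2) (v : Fin n) : Finset (Fin n) :=
  Finset.univ.filter fun u => u ≠ v ∧ c s(v, u) = k

lemma mem_nbr {n : ℕ} {c : Sym2 (Fin n) → Fin 2} {k : Fin 2} {v u : Fin n} :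
    u ∈ nbr c k v ↔ u ≠ v ∧ c s(v, u) = k := by
  simp [nbr]

lemma nbr_comm {n : ℕ} {c : Sym2 (Fin n) → Fin 2} {k : Fin 2} {v u : Fin n} :
    u ∈ nbr c k v ↔ v ∈ nbr c k u := by
  rw [mem_nbr, mem_nbr, Sym2.eq_swap, ne_comm]

lemma other_color {r b x : Fin 2} (h : r ≠ b) (hx : x ≠ r) : x = b := by
  fin_cases r <;> fin_cases b <;> fin_cases x <;> simp_all

/-- The core embedding lemma. -/
lemma copy_of_core {c : Sym2 (Fin (2*t-1)) → Fin 2} {k : Fin 2} (ht : 7 ≤ t)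
    (w a1 a2 b1 b2 : Fin (2*t-1)) (S : Finset (Fin (2*t-1)))
    (hS : S.card = t - 5)
    (hd12 : a1 ≠ a2) (hd13 : a1 ≠ b1) (hd14 : a1 ≠ b2) (hd23 : a2 ≠ b1)
    (hd24 : a2 ≠ b2) (hd34 : b1 ≠ b2)
    (hw1 : a1 ≠ w) (hw2 : a2 ≠ w) (hw3 : b1 ≠ w) (hw4 : b2 ≠ w)
    (hSd : ∀ x ∈ S, x ≠ w ∧ x ≠ a1 ∧ x ≠ a2 ∧ x ≠ b1 ∧ x ≠ b2)
    (hstar : ∀ u, (u = a1 ∨ u = a2 ∨ u = b1 ∨ u = b2 ∨ u ∈ S) → c s(w, u) = k)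
    (hA : c s(a1, a2) = k) (hB : c s(b1, b2) = k) :
    HasMonoCopy (SGraph t 2) c := by
  have h5t : 5 + (t - 5) = t := by omega
  set vec : Fin 5 → Fin (2*t-1) := fun i => match i with
    | ⟨0,_⟩ => w | ⟨1,_⟩ => a1 | ⟨2,_⟩ => a2 | ⟨3,_⟩ => b1 | ⟨4,_⟩ => b2
    with hvec
  set g : Fin (t-5) → Fin (2*t-1) := fun i => ((S.orderIsoOfFin hS) i : Fin (2*t-1)) with hg
  have hginj : Function.Injective g := by
    intro i j hij
    exact (S.orderIsoOfFin hS).injective (Subtype.ext hij)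
  have hgS : ∀ i, g i ∈ S := fun i => ((S.orderIsoOfFin hS) i).2
  have s1 : w ≠ a1 := hw1.symm
  have s2 : w ≠ a2 := hw2.symm
  have s3 : w ≠ b1 := hw3.symm
  have s4 : w ≠ b2 := hw4.symm
  have s5 : a2 ≠ a1 := hd12.symm
  have s6 : b1 ≠ a1 := hd13.symm
  have s7 : b2 ≠ a1 := hd14.symm
  have s8 : b1 ≠ a2 := hd23.symm
  have s9 : b2 ≠ a2 := hd24.symm
  have s10 : b2 ≠ b1 := hd34.symm
  have hvecinj : Function.Injective vec := by
    intro i j hij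
    fin_cases i <;> fin_cases j <;> first | rfl | exact absurd hij (by assumption)
  have hdisj : ∀ i j, vec i ≠ g j := by
    intro i j
    have h5 := hSd _ (hgS j)
    fin_cases i
    · exact fun h => h5.1 h.symm
    · exact fun h => h5.2.1 h.symm
    · exact fun h => h5.2.2.1 h.symm
    · exact fun h => h5.2.2.2.1 h.symm
    · exact fun h => h5.2.2.2.2 h.symm
  have hf1 : Function.Injective (Sum.elim vec g) :=
    Function.Injective.sumElim hvecinj hginj hdisj
  set q : Fin t ≃ Fin 5 ⊕ Fin (t-5) :=
    (finCongr h5t.symm).trans finSumFinEquiv.symm with hq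
  set F : Fin t ↪ Fin (2*t-1) := ⟨Sum.elim vec g ∘ q, hf1.comp q.injective⟩ with hF
  have hqlo : ∀ (i : Fin t) (hi : i.val < 5), q i = Sum.inl ⟨i.val, hi⟩ := by
    intro i hi
    have h1 : (finCongr h5t.symm i) = Fin.castAdd (t-5) ⟨i.val, hi⟩ := by
      apply Fin.ext; simp
    rw [hq]
    simp only [Equiv.trans_apply, h1, finSumFinEquiv_symm_apply_castAdd]
  have hqhi : ∀ (i : Fin t) (hi : 5 ≤ i.val), q i = Sum.inr ⟨i.val - 5, by omega⟩ := by
    intro i hi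
    have h1 : (finCongr h5t.symm i) = Fin.natAdd 5 ⟨i.val - 5, by omega⟩ := by
      apply Fin.ext; simp; omega
    rw [hq]
    simp only [Equiv.trans_apply, h1, finSumFinEquiv_symm_apply_natAdd]
  have hF0 : ∀ i : Fin t, i.val = 0 → F i = w := by
    intro i hi
    show Sum.elim vec g (q i) = w
    rw [hqlo i (by omega)]
    have : (⟨i.val, by omega⟩ : Fin 5) = ⟨0, by norm_num⟩ := Fin.ext hi
    rw [this]; rfl
  have hF1 : ∀ i : Fin t, i.val = 1 → F i = a1 := by
    intro i hi
    show Sum.elim vec g (q i) = a1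
    rw [hqlo i (by omega)]
    have : (⟨i.val, by omega⟩ : Fin 5) = ⟨1, by norm_num⟩ := Fin.ext hi
    rw [this]; rfl
  have hF2 : ∀ i : Fin t, i.val = 2 → F i = a2 := by
    intro i hi
    show Sum.elim vec g (q i) = a2
    rw [hqlo i (by omega)]
    have : (⟨i.val, by omega⟩ : Fin 5) = ⟨2, by norm_num⟩ := Fin.ext hi
    rw [this]; rfl
  have hF3 : ∀ i : Fin t, i.val = 3 → F i = b1 := by
    intro i hi
    show Sum.elim vec g (q i) = b1
    rw [hqlo i (by omega)]
    have : (⟨i.val, by omega⟩ : Fin 5) = ⟨3, by norm_num⟩ := Fin.ext hi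
    rw [this]; rfl
  have hF4 : ∀ i : Fin t, i.val = 4 → F i = b2 := by
    intro i hi
    show Sum.elim vec g (q i) = b2
    rw [hqlo i (by omega)]
    have : (⟨i.val, by omega⟩ : Fin 5) = ⟨4, by norm_num⟩ := Fin.ext hi
    rw [this]; rfl
  have hF5 : ∀ i : Fin t, 5 ≤ i.val → F i ∈ S := by
    intro i hi
    show Sum.elim vec g (q i) ∈ S
    rw [hqhi i hi]
    exact hgS _
  refine ⟨F, k, ?_⟩
  have aux : ∀ a b : Fin t, a ≠ b →
      (a.val = 0 ∨ (b.val = a.val + 1 ∧ a.val % 2 = 1 ∧ b.val ≤ 2 * 2)) →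
      c s(F a, F b) = k := by
    intro a b hne hr
    rcases hr with h0 | ⟨hsucc, hodd, hle⟩
    · rw [hF0 a h0]
      have hb0 : b.val ≠ 0 := fun h => hne (Fin.ext (by omega))
      have : b.val = 1 ∨ b.val = 2 ∨ b.val = 3 ∨ b.val = 4 ∨ 5 ≤ b.val := by omega
      rcases this with h | h | h | h | h
      · rw [hF1 b h]; exact hstar a1 (by tauto)
      · rw [hF2 b h]; exact hstar a2 (by tauto)
      · rw [hF3 b h]; exact hstar b1 (by tauto)
      · rw [hF4 b h]; exact hstar b2 (by tauto)
      · exact hstar _ (Or.inr (Or.inr (Or.inr (Or.inr (hF5 b h)))))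
    · have : (a.val = 1 ∧ b.val = 2) ∨ (a.val = 3 ∧ b.val = 4) := by omega
      rcases this with ⟨ha, hb⟩ | ⟨ha, hb⟩
      · rw [hF1 a ha, hF2 b hb]; exact hA
      · rw [hF3 a ha, hF4 b hb]; exact hB
  intro a b hadj
  rw [SGraph, SimpleGraph.fromRel_adj] at hadj
  obtain ⟨hne, h | h⟩ := hadj
  · exact aux a b hne h
  · rw [Sym2.eq_swap]; exact aux b a hne.symm h

lemma copy_of_matching {c : Sym2 (Fin (2*t-1)) → Fin 2} {k : Fin 2} (ht : 7 ≤ t)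
    (v : Fin (2*t-1)) (hv : t - 1 ≤ (nbr c k v).card)
    (a1 a2 b1 b2 : Fin (2*t-1))
    (h1 : a1 ∈ nbr c k v) (h2 : a2 ∈ nbr c k v) (h3 : b1 ∈ nbr c k v) (h4 : b2 ∈ nbr c k v)
    (hd12 : a1 ≠ a2) (hd13 : a1 ≠ b1) (hd14 : a1 ≠ b2) (hd23 : a2 ≠ b1)
    (hd24 : a2 ≠ b2) (hd34 : b1 ≠ b2)
    (hA : c s(a1, a2) = k) (hB : c s(b1, b2) = k) :
    HasMonoCopy (SGraph t 2) c := by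
  have hq4 : ({a1, a2, b1, b2} : Finset (Fin (2*t-1))).card ≤ 4 := by
    have h1 := Finset.card_insert_le a1 ({a2, b1, b2} : Finset (Fin (2*t-1)))
    have h2 := Finset.card_insert_le a2 ({b1, b2} : Finset (Fin (2*t-1)))
    have h3 := Finset.card_insert_le b1 ({b2} : Finset (Fin (2*t-1)))
    have h4 : ({b2} : Finset (Fin (2*t-1))).card = 1 := Finset.card_singleton _
    omega
  have hsub : t - 5 ≤ ((nbr c k v) \ {a1, a2, b1, b2}).card := by
    have h := Finset.le_card_sdiff ({a1, a2, b1, b2} : Finset (Fin (2*t-1))) (nbr c k v)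
    omega
  obtain ⟨S, hS1, hS2⟩ := Finset.exists_subset_card_eq hsub
  have hSmem : ∀ x ∈ S, (x ∈ nbr c k v) ∧ x ∉ ({a1, a2, b1, b2} : Finset (Fin (2*t-1))) := by
    intro x hx
    exact Finset.mem_sdiff.mp (hS1 hx)
  apply copy_of_core ht v a1 a2 b1 b2 S hS2 hd12 hd13 hd14 hd23 hd24 hd34
    (mem_nbr.mp h1).1 (mem_nbr.mp h2).1 (mem_nbr.mp h3).1 (mem_nbr.mp h4).1
  · intro x hx
    obtain ⟨hxn, hxq⟩ := hSmem x hx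
    simp only [Finset.mem_insert, Finset.mem_singleton] at hxq
    push_neg at hxq
    exact ⟨(mem_nbr.mp hxn).1, hxq.1, hxq.2.1, hxq.2.2.1, hxq.2.2.2⟩
  · intro u hu
    rcases hu with h | h | h | h | h
    · exact h ▸ (mem_nbr.mp h1).2
    · exact h ▸ (mem_nbr.mp h2).2
    · exact h ▸ (mem_nbr.mp h3).2
    · exact h ▸ (mem_nbr.mp h4).2
    · exact (mem_nbr.mp (hSmem u h).1).2
  · exact hA
  · exact hB

lemma exists_four {α : Type*} [DecidableEq α] {s : Finset α} (h : 4 ≤ s.card) :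
    ∃ a ∈ s, ∃ b ∈ s, ∃ c ∈ s, ∃ d ∈ s,
      a ≠ b ∧ a ≠ c ∧ a ≠ d ∧ b ≠ c ∧ b ≠ d ∧ c ≠ d := by
  obtain ⟨a, ha⟩ := Finset.card_pos.mp (show 0 < s.card by omega)
  obtain ⟨b, hb⟩ := Finset.card_pos.mp (show 0 < (s.erase a).card by
    rw [Finset.card_erase_of_mem ha]; omega)
  obtain ⟨c, hc⟩ := Finset.card_pos.mp (show 0 < ((s.erase a).erase b).card by
    rw [Finset.card_erase_of_mem hb, Finset.card_erase_of_mem ha]; omega)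
  obtain ⟨d, hd⟩ := Finset.card_pos.mp (show 0 < (((s.erase a).erase b).erase c).card by
    rw [Finset.card_erase_of_mem hc, Finset.card_erase_of_mem hb,
      Finset.card_erase_of_mem ha]; omega)
  simp only [Finset.mem_erase] at hb hc hd
  exact ⟨a, ha, b, hb.2, c, hc.2.2, d, hd.2.2.2, (hb.1).symm, (hc.2.1).symm, (hd.2.2.1).symm,
    (hc.1).symm, (hd.2.1).symm, (hd.1).symm⟩

lemma clique_of_big {c : Sym2 (Fin (2*t-1)) → Fin 2} (hnc : ¬ HasMonoCopy (SGraph t 2) c)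
    (ht : 7 ≤ t) {r b : Fin 2} (hrb : r ≠ b) (v : Fin (2*t-1))
    (hv : t - 1 ≤ (nbr c r v).card) :
    ∃ C : Finset (Fin (2*t-1)), C ⊆ nbr c r v ∧ (nbr c r v).card ≤ C.card + 2 ∧
      (∀ x ∈ C, ∀ y ∈ C, x ≠ y → c s(x, y) = b) := by
  by_cases hE : ∃ p ∈ nbr c r v, ∃ q ∈ nbr c r v, p ≠ q ∧ c s(p, q) = r
  · obtain ⟨p, hp, q, hq, hpq, hcpq⟩ := hE
    refine ⟨(nbr c r v) \ {p, q}, Finset.sdiff_subset, ?_, ?_⟩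
    · have h2 : ({p, q} : Finset (Fin (2*t-1))).card ≤ 2 := by
        apply le_trans (Finset.card_insert_le _ _); simp
      have := Finset.le_card_sdiff ({p, q} : Finset (Fin (2*t-1))) (nbr c r v)
      omega
    · intro x hx y hy hxy
      by_contra hne
      have hx' := Finset.mem_sdiff.mp hx
      have hy' := Finset.mem_sdiff.mp hy
      simp only [Finset.mem_insert, Finset.mem_singleton] at hx' hy'
      push_neg at hx'
      push_neg at hy'
      have hcxy : c s(x, y) = r := other_color hrb.symm hne
      exact hnc (copy_of_matching ht v hv p q x y hp hq hx'.1 hy'.1 hpq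
        (fun h => hx'.2.1 h.symm) (fun h => hy'.2.1 h.symm)
        (fun h => hx'.2.2 h.symm) (fun h => hy'.2.2 h.symm) hxy hcpq hcxy)
  · push_neg at hE
    refine ⟨nbr c r v, subset_rfl, by omega, ?_⟩
    intro x hx y hy hxy
    exact other_color hrb (hE x hx y hy hxy)

/-- a vertex of a monochromatic clique of size ≥ 5 has small degree in the clique color. -/
lemma clique_vertex_small {c : Sym2 (Fin (2*t-1)) → Fin 2} (hnc : ¬ HasMonoCopy (SGraph t 2) c)
    (ht : 7 ≤ t) {b : Fin 2} {C : Finset (Fin (2*t-1))} (hC : 5 ≤ C.card)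
    (hclq : ∀ x ∈ C, ∀ y ∈ C, x ≠ y → c s(x, y) = b)
    {x : Fin (2*t-1)} (hx : x ∈ C) : (nbr c b x).card ≤ t - 2 := by
  by_contra hbig
  push_neg at hbig
  have hbig' : t - 1 ≤ (nbr c b x).card := by omega
  obtain ⟨y1, hy1, y2, hy2, y3, hy3, y4, hy4, h12, h13, h14, h23, h24, h34⟩ :=
    exists_four (show 4 ≤ (C.erase x).card by rw [Finset.card_erase_of_mem hx]; omega)
  have hmem : ∀ y ∈ C.erase x, y ∈ nbr c b x := by
    intro y hy
    have hy' := Finset.mem_erase.mp hy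
    exact mem_nbr.mpr ⟨hy'.1, hclq x hx y hy'.2 (Ne.symm hy'.1)⟩
  have hcol : ∀ y ∈ C.erase x, ∀ z ∈ C.erase x, y ≠ z → c s(y, z) = b := by
    intro y hy z hz hyz
    exact hclq y (Finset.mem_erase.mp hy).2 z (Finset.mem_erase.mp hz).2 hyz
  exact hnc (copy_of_matching ht x hbig' y1 y2 y3 y4 (hmem _ hy1) (hmem _ hy2)
    (hmem _ hy3) (hmem _ hy4) h12 h13 h14 h23 h24 h34
    (hcol _ hy1 _ hy2 h12) (hcol _ hy3 _ hy4 h34))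

/-- monochromatic cliques have size at most t-1. -/
lemma clique_card_le {c : Sym2 (Fin (2*t-1)) → Fin 2} (hnc : ¬ HasMonoCopy (SGraph t 2) c)
    (ht : 7 ≤ t) {b : Fin 2} {C : Finset (Fin (2*t-1))}
    (hclq : ∀ x ∈ C, ∀ y ∈ C, x ≠ y → c s(x, y) = b) : C.card ≤ t - 1 := by
  by_contra hbig
  push_neg at hbig
  obtain ⟨x, hx⟩ := Finset.card_pos.mp (show 0 < C.card by omega)
  have hsub : C.erase x ⊆ nbr c b x := by
    intro y hy
    have hy' := Finset.mem_erase.mp hy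
    exact mem_nbr.mpr ⟨hy'.1, hclq x hx y hy'.2 (Ne.symm hy'.1)⟩
  have h1 : t - 1 ≤ (C.erase x).card := by rw [Finset.card_erase_of_mem hx]; omega
  have h2 := Finset.card_le_card hsub
  have := clique_vertex_small hnc ht (by omega) hclq hx
  omega

lemma nbr_card_add {c : Sym2 (Fin (2*t-1)) → Fin 2} {r b : Fin 2} (hrb : r ≠ b)
    (v : Fin (2*t-1)) (ht : 7 ≤ t) :
    (nbr c r v).card + (nbr c b v).card = 2*t - 2 := by
  have hdisj : Disjoint (nbr c r v) (nbr c b v) := by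
    rw [Finset.disjoint_left]
    intro u hu hu'
    exact hrb ((mem_nbr.mp hu).2.symm.trans (mem_nbr.mp hu').2)
  have hunion : nbr c r v ∪ nbr c b v = Finset.univ.erase v := by
    ext u
    simp only [Finset.mem_union, mem_nbr, Finset.mem_erase, Finset.mem_univ, and_true]
    constructor
    · rintro (⟨h1, _⟩ | ⟨h1, _⟩) <;> exact h1
    · intro hu
      rcases eq_or_ne (c s(v, u)) r with h | h
      · exact Or.inl ⟨hu, h⟩
      · exact Or.inr ⟨hu, other_color hrb h⟩
  have h1 := Finset.card_union_of_disjoint hdisj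
  rw [hunion, Finset.card_erase_of_mem (Finset.mem_univ v)] at h1
  have h2 : (Finset.univ : Finset (Fin (2*t-1))).card = 2*t-1 := Finset.card_fin _
  omega

/-- auxiliary: a vertex with big k-degree whose k-neighborhood contains a k-triangle
and a further k-edge out of the triangle gives a copy. -/
lemma k4_aux {c : Sym2 (Fin (2*t-1)) → Fin 2} {k : Fin 2} (hnc : ¬ HasMonoCopy (SGraph t 2) c)
    (ht : 7 ≤ t) (v y1 y2 y3 x : Fin (2*t-1))
    (hv : t - 1 ≤ (nbr c k v).card)
    (hy1 : y1 ∈ nbr c k v) (hy2 : y2 ∈ nbr c k v) (hy3 : y3 ∈ nbr c k v)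
    (hx : x ∈ nbr c k v)
    (h12 : y1 ≠ y2) (h13 : y1 ≠ y3) (h23 : y2 ≠ y3)
    (hx1 : x ≠ y1) (hx2 : x ≠ y2) (hx3 : x ≠ y3)
    (he1 : c s(x, y1) = k) (he23 : c s(y2, y3) = k) : False :=
  hnc (copy_of_matching ht v hv x y1 y2 y3 hx hy1 hy2 hy3 hx1 hx2 hx3 h12 h13 h23 he1 he23)

lemma k4_false {c : Sym2 (Fin (2*t-1)) → Fin 2} {k : Fin 2} (hnc : ¬ HasMonoCopy (SGraph t 2) c)
    (ht : 7 ≤ t) (c1 c2 c3 c4 : Fin (2*t-1))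
    (d12 : c1 ≠ c2) (d13 : c1 ≠ c3) (d14 : c1 ≠ c4) (d23 : c2 ≠ c3) (d24 : c2 ≠ c4)
    (d34 : c3 ≠ c4)
    (h12 : c s(c1, c2) = k) (h13 : c s(c1, c3) = k) (h14 : c s(c1, c4) = k)
    (h23 : c s(c2, c3) = k) (h24 : c s(c2, c4) = k) (h34 : c s(c3, c4) = k)
    (hb1 : t - 1 ≤ (nbr c k c1).card) (hb2 : t - 1 ≤ (nbr c k c2).card)
    (hb3 : t - 1 ≤ (nbr c k c3).card) (hb4 : t - 1 ≤ (nbr c k c4).card) : False := by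
  set Q : Finset (Fin (2*t-1)) := {c1, c2, c3, c4} with hQ
  have hQcard : Q.card = 4 := by
    rw [hQ]
    rw [Finset.card_insert_of_notMem (by simp [d12, d13, d14]),
      Finset.card_insert_of_notMem (by simp [d23, d24]),
      Finset.card_insert_of_notMem (by simp [d34]), Finset.card_singleton]
  -- the key claim: x in the k-neighborhood of cᵢ but outside Q has non-k edges to the
  -- other three cⱼ
  have hkey : ∀ v y1 y2 y3 : Fin (2*t-1), v ≠ y1 → v ≠ y2 → v ≠ y3 → y1 ≠ y2 → y1 ≠ y3 →
      y2 ≠ y3 → t - 1 ≤ (nbr c k v).card →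
      y1 ∈ nbr c k v → y2 ∈ nbr c k v → y3 ∈ nbr c k v → c s(y2, y3) = k →
      ∀ x ∈ nbr c k v, x ≠ y1 → x ≠ y2 → x ≠ y3 → c s(x, y1) ≠ k := by
    intro v y1 y2 y3 _ _ _ h12' h13' h23' hv hy1 hy2 hy3 hcol x hx hx1 hx2 hx3 hxe
    exact k4_aux hnc ht v y1 y2 y3 x hv hy1 hy2 hy3 hx h12' h13' h23' hx1 hx2 hx3 hxe hcol
  -- memberships
  have m12 : c2 ∈ nbr c k c1 := mem_nbr.mpr ⟨d12.symm, h12⟩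
  have m13 : c3 ∈ nbr c k c1 := mem_nbr.mpr ⟨d13.symm, h13⟩
  have m14 : c4 ∈ nbr c k c1 := mem_nbr.mpr ⟨d14.symm, h14⟩
  have m21 : c1 ∈ nbr c k c2 := mem_nbr.mpr ⟨d12, by rw [Sym2.eq_swap]; exact h12⟩
  have m23 : c3 ∈ nbr c k c2 := mem_nbr.mpr ⟨d23.symm, h23⟩
  have m24 : c4 ∈ nbr c k c2 := mem_nbr.mpr ⟨d24.symm, h24⟩
  have m31 : c1 ∈ nbr c k c3 := mem_nbr.mpr ⟨d13, by rw [Sym2.eq_swap]; exact h13⟩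
  have m32 : c2 ∈ nbr c k c3 := mem_nbr.mpr ⟨d23, by rw [Sym2.eq_swap]; exact h23⟩
  have m34 : c4 ∈ nbr c k c3 := mem_nbr.mpr ⟨d34.symm, h34⟩
  have m41 : c1 ∈ nbr c k c4 := mem_nbr.mpr ⟨d14, by rw [Sym2.eq_swap]; exact h14⟩
  have m42 : c2 ∈ nbr c k c4 := mem_nbr.mpr ⟨d24, by rw [Sym2.eq_swap]; exact h24⟩
  have m43 : c3 ∈ nbr c k c4 := mem_nbr.mpr ⟨d34, by rw [Sym2.eq_swap]; exact h34⟩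
  set D1 := (nbr c k c1) \ Q with hD1
  set D2 := (nbr c k c2) \ Q with hD2
  set D3 := (nbr c k c3) \ Q with hD3
  set D4 := (nbr c k c4) \ Q with hD4
  -- each x ∈ Dᵢ is non-k-adjacent to all four c's except cᵢ
  have memQ : ∀ x : Fin (2*t-1), x ∉ Q → x ≠ c1 ∧ x ≠ c2 ∧ x ≠ c3 ∧ x ≠ c4 := by
    intro x hxq
    simp only [hQ, Finset.mem_insert, Finset.mem_singleton] at hxq
    push_neg at hxq
    exact hxq
  have hD1p : ∀ x ∈ D1, c s(x, c2) ≠ k ∧ c s(x, c3) ≠ k ∧ c s(x, c4) ≠ k := by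
    intro x hx
    obtain ⟨hxn, hxq⟩ := Finset.mem_sdiff.mp hx
    obtain ⟨e1, e2, e3, e4⟩ := memQ x hxq
    exact ⟨hkey c1 c2 c3 c4 d12 d13 d14 d23 d24 d34 hb1 m12 m13 m14 h34 x hxn e2 e3 e4,
      hkey c1 c3 c2 c4 d13 d12 d14 d23.symm d34 d24 hb1 m13 m12 m14 h24 x hxn e3 e2 e4,
      hkey c1 c4 c2 c3 d14 d12 d13 d24.symm d34.symm d23 hb1 m14 m12 m13 h23 x hxn e4 e2 e3⟩
  have hD2p : ∀ x ∈ D2, c s(x, c1) ≠ k ∧ c s(x, c3) ≠ k ∧ c s(x, c4) ≠ k := by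
    intro x hx
    obtain ⟨hxn, hxq⟩ := Finset.mem_sdiff.mp hx
    obtain ⟨e1, e2, e3, e4⟩ := memQ x hxq
    exact ⟨hkey c2 c1 c3 c4 d12.symm d23 d24 d13 d14 d34 hb2 m21 m23 m24 h34 x hxn e1 e3 e4,
      hkey c2 c3 c1 c4 d23 d12.symm d24 d13.symm d34 d14 hb2 m23 m21 m24 h14 x hxn e3 e1 e4,
      hkey c2 c4 c1 c3 d24 d12.symm d23 d14.symm d34.symm d13 hb2 m24 m21 m23 h13 x hxn e4 e1 e3⟩
  have hD3p : ∀ x ∈ D3, c s(x, c1) ≠ k ∧ c s(x, c2) ≠ k ∧ c s(x, c4) ≠ k := by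
    intro x hx
    obtain ⟨hxn, hxq⟩ := Finset.mem_sdiff.mp hx
    obtain ⟨e1, e2, e3, e4⟩ := memQ x hxq
    exact ⟨hkey c3 c1 c2 c4 d13.symm d23.symm d34 d12 d14 d24 hb3 m31 m32 m34 h24 x hxn e1 e2 e4,
      hkey c3 c2 c1 c4 d23.symm d13.symm d34 d12.symm d24 d14 hb3 m32 m31 m34 h14 x hxn e2 e1 e4,
      hkey c3 c4 c1 c2 d34 d13.symm d23.symm d14.symm d24.symm d12 hb3 m34 m31 m32 h12 x hxn e4 e1 e2⟩
  have hD4p : ∀ x ∈ D4, c s(x, c1) ≠ k ∧ c s(x, c2) ≠ k ∧ c s(x, c3) ≠ k := by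
    intro x hx
    obtain ⟨hxn, hxq⟩ := Finset.mem_sdiff.mp hx
    obtain ⟨e1, e2, e3, e4⟩ := memQ x hxq
    exact ⟨hkey c4 c1 c2 c3 d14.symm d24.symm d34.symm d12 d13 d23 hb4 m41 m42 m43 h23 x hxn e1 e2 e3,
      hkey c4 c2 c1 c3 d24.symm d14.symm d34.symm d12.symm d23 d13 hb4 m42 m41 m43 h13 x hxn e2 e1 e3,
      hkey c4 c3 c1 c2 d34.symm d14.symm d24.symm d13.symm d23.symm d12 hb4 m43 m41 m42 h12 x hxn e3 e1 e2⟩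
  -- pairwise disjointness
  have swapmem : ∀ (u v' : Fin (2*t-1)), u ∈ nbr c k v' → c s(u, v') = k := by
    intro u v' hu
    rw [Sym2.eq_swap]
    exact (mem_nbr.mp hu).2
  have g12 : Disjoint D1 D2 := by
    rw [Finset.disjoint_left]
    intro x hx hx2
    exact (hD1p x hx).1 (swapmem x c2 (Finset.mem_sdiff.mp hx2).1)
  have g13 : Disjoint D1 D3 := by
    rw [Finset.disjoint_left]
    intro x hx hx2
    exact (hD1p x hx).2.1 (swapmem x c3 (Finset.mem_sdiff.mp hx2).1)
  have g14 : Disjoint D1 D4 := by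
    rw [Finset.disjoint_left]
    intro x hx hx2
    exact (hD1p x hx).2.2 (swapmem x c4 (Finset.mem_sdiff.mp hx2).1)
  have g23 : Disjoint D2 D3 := by
    rw [Finset.disjoint_left]
    intro x hx hx2
    exact (hD2p x hx).2.1 (swapmem x c3 (Finset.mem_sdiff.mp hx2).1)
  have g24 : Disjoint D2 D4 := by
    rw [Finset.disjoint_left]
    intro x hx hx2
    exact (hD2p x hx).2.2 (swapmem x c4 (Finset.mem_sdiff.mp hx2).1)
  have g34 : Disjoint D3 D4 := by
    rw [Finset.disjoint_left]
    intro x hx hx2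
    exact (hD3p x hx).2.2 (swapmem x c4 (Finset.mem_sdiff.mp hx2).1)
  have gQ1 : Disjoint D1 Q := Finset.sdiff_disjoint
  have gQ2 : Disjoint D2 Q := Finset.sdiff_disjoint
  have gQ3 : Disjoint D3 Q := Finset.sdiff_disjoint
  have gQ4 : Disjoint D4 Q := Finset.sdiff_disjoint
  -- cards of the Dᵢ
  have hcard : ∀ (v' : Fin (2*t-1)), v' ∈ Q → t - 1 ≤ (nbr c k v').card →
      t - 1 ≤ ((nbr c k v') \ Q).card + 3 := by
    intro v' hv' hbig
    have hsub : nbr c k v' ⊆ ((nbr c k v') \ Q) ∪ Q.erase v' := by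
      intro x hx
      by_cases hxQ : x ∈ Q
      · exact Finset.mem_union_right _ (Finset.mem_erase.mpr ⟨(mem_nbr.mp hx).1, hxQ⟩)
      · exact Finset.mem_union_left _ (Finset.mem_sdiff.mpr ⟨hx, hxQ⟩)
    have h1 := Finset.card_le_card hsub
    have h2 := Finset.card_union_le ((nbr c k v') \ Q) (Q.erase v')
    have h3 : (Q.erase v').card = 3 := by rw [Finset.card_erase_of_mem hv', hQcard]
    omega
  have k1 : t - 1 ≤ D1.card + 3 := hcard c1 (by simp [hQ]) hb1
  have k2 : t - 1 ≤ D2.card + 3 := hcard c2 (by simp [hQ]) hb2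
  have k3 : t - 1 ≤ D3.card + 3 := hcard c3 (by simp [hQ]) hb3
  have k4 : t - 1 ≤ D4.card + 3 := hcard c4 (by simp [hQ]) hb4
  -- total count
  have htot : D1.card + D2.card + D3.card + D4.card + Q.card ≤ 2*t - 1 := by
    have e4 : (D4 ∪ Q).card = D4.card + Q.card := Finset.card_union_of_disjoint gQ4
    have e3 : (D3 ∪ (D4 ∪ Q)).card = D3.card + (D4 ∪ Q).card :=
      Finset.card_union_of_disjoint (Finset.disjoint_union_right.mpr ⟨g34, gQ3⟩)
    have e2 : (D2 ∪ (D3 ∪ (D4 ∪ Q))).card = D2.card + (D3 ∪ (D4 ∪ Q)).card :=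
      Finset.card_union_of_disjoint (Finset.disjoint_union_right.mpr ⟨g23,
        Finset.disjoint_union_right.mpr ⟨g24, gQ2⟩⟩)
    have e1 : (D1 ∪ (D2 ∪ (D3 ∪ (D4 ∪ Q)))).card = D1.card + (D2 ∪ (D3 ∪ (D4 ∪ Q))).card :=
      Finset.card_union_of_disjoint (Finset.disjoint_union_right.mpr ⟨g12,
        Finset.disjoint_union_right.mpr ⟨g13,
          Finset.disjoint_union_right.mpr ⟨g14, gQ1⟩⟩⟩)
    have hle := Finset.card_le_card
      (Finset.subset_univ (D1 ∪ (D2 ∪ (D3 ∪ (D4 ∪ Q)))))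
    have huniv : (Finset.univ : Finset (Fin (2*t-1))).card = 2*t-1 := Finset.card_fin _
    omega
  omega

/-- the final contradiction device: a center `w` red-adjacent to two vertices of `P` and
three of `Q`, where `P`-vertices miss at most one `Q`-vertex in red. -/
lemma punch {c : Sym2 (Fin (2*t-1)) → Fin 2} {k : Fin 2} (hnc : ¬ HasMonoCopy (SGraph t 2) c)
    (ht : 7 ≤ t) (P Q : Finset (Fin (2*t-1)))
    (hd : ∀ p ∈ P, p ∉ Q)
    (hmiss : ∀ p ∈ P, (Q \ nbr c k p).card ≤ 1)
    (w : Fin (2*t-1)) (hw : t - 1 ≤ (nbr c k w).card)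
    (hP : 2 ≤ (P ∩ nbr c k w).card) (hQ : 3 ≤ (Q ∩ nbr c k w).card) : False := by
  obtain ⟨x1, hx1, x2, hx2, hx12⟩ :=
    Finset.one_lt_card.mp (show 1 < (P ∩ nbr c k w).card by omega)
  have hx1P : x1 ∈ P := (Finset.mem_inter.mp hx1).1
  have hx2P : x2 ∈ P := (Finset.mem_inter.mp hx2).1
  -- pick y1 red-adjacent to x1
  have hy1c : 0 < ((Q ∩ nbr c k w) ∩ nbr c k x1).card := by
    have hss : (Q ∩ nbr c k w) \ nbr c k x1 ⊆ Q \ nbr c k x1 :=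
      Finset.sdiff_subset_sdiff Finset.inter_subset_left (le_refl _)
    have h1 := Finset.card_le_card hss
    have h2 := Finset.card_inter_add_card_sdiff (Q ∩ nbr c k w) (nbr c k x1)
    have h3 := hmiss x1 hx1P
    omega
  obtain ⟨y1, hy1⟩ := Finset.card_pos.mp hy1c
  -- pick y2 ≠ y1 red-adjacent to x2
  have hy2c : 0 < (((Q ∩ nbr c k w) ∩ nbr c k x2).erase y1).card := by
    have hss : (Q ∩ nbr c k w) \ nbr c k x2 ⊆ Q \ nbr c k x2 :=
      Finset.sdiff_subset_sdiff Finset.inter_subset_left (le_refl _)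
    have h1 := Finset.card_le_card hss
    have h2 := Finset.card_inter_add_card_sdiff (Q ∩ nbr c k w) (nbr c k x2)
    have h3 := hmiss x2 hx2P
    have h4 : 2 ≤ ((Q ∩ nbr c k w) ∩ nbr c k x2).card := by omega
    by_cases hy1m : y1 ∈ (Q ∩ nbr c k w) ∩ nbr c k x2
    · rw [Finset.card_erase_of_mem hy1m]; omega
    · rw [Finset.erase_eq_of_notMem hy1m]; omega
  obtain ⟨y2, hy2⟩ := Finset.card_pos.mp hy2c
  have hy12 : y1 ≠ y2 := fun h => (Finset.mem_erase.mp hy2).1 h.symm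
  have hy1' := Finset.mem_inter.mp hy1
  have hy2' := Finset.mem_inter.mp (Finset.mem_erase.mp hy2).2
  have hy1Q : y1 ∈ Q := (Finset.mem_inter.mp hy1'.1).1
  have hy2Q : y2 ∈ Q := (Finset.mem_inter.mp hy2'.1).1
  have hy1w : y1 ∈ nbr c k w := (Finset.mem_inter.mp hy1'.1).2
  have hy2w : y2 ∈ nbr c k w := (Finset.mem_inter.mp hy2'.1).2
  have hx1w : x1 ∈ nbr c k w := (Finset.mem_inter.mp hx1).2
  have hx2w : x2 ∈ nbr c k w := (Finset.mem_inter.mp hx2).2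
  have e1 : c s(x1, y1) = k := (mem_nbr.mp hy1'.2).2
  have e2 : c s(x2, y2) = k := (mem_nbr.mp hy2'.2).2
  exact hnc (copy_of_matching ht w hw x1 y1 x2 y2 hx1w hy1w hx2w hy2w
    (fun h => hd x1 hx1P (h ▸ hy1Q)) hx12 (fun h => hd x1 hx1P (h ▸ hy2Q))
    (fun h => hd x2 hx2P (h.symm ▸ hy1Q)) hy12 (fun h => hd x2 hx2P (h ▸ hy2Q)) e1 e2)

/-- endgame in the case where one of the two cliques has full size t-1. -/
lemma endgame_full {c : Sym2 (Fin (2*t-1)) → Fin 2} {r : Fin 2}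
    (hnc : ¬ HasMonoCopy (SGraph t 2) c) (ht : 7 ≤ t)
    (X Y : Finset (Fin (2*t-1)))
    (hdXY : ∀ x ∈ X, x ∉ Y)
    (hX1 : t - 2 ≤ X.card) (hX2 : X.card ≤ t - 1) (hY2 : Y.card ≤ t - 1)
    (hmissX : ∀ x ∈ X, ∀ T : Finset (Fin (2*t-1)), (∀ u ∈ T, u ∉ X ∧ u ≠ x) →
      (T \ nbr c r x).card + X.card ≤ t - 1)
    (hmissY : ∀ y ∈ Y, ∀ T : Finset (Fin (2*t-1)), (∀ u ∈ T, u ∉ Y ∧ u ≠ y) →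
      (T \ nbr c r y).card + Y.card ≤ t - 1)
    (hYfull : Y.card = t - 1) : False := by
  have hdYX : ∀ y ∈ Y, y ∉ X := fun y hy hyX => hdXY y hyX hy
  -- a clique of full size t-1 is red-adjacent to everything outside it
  have hfulladj : ∀ (P : Finset (Fin (2*t-1))), P.card = t - 1 →
      (∀ p ∈ P, ∀ T : Finset (Fin (2*t-1)), (∀ u ∈ T, u ∉ P ∧ u ≠ p) →
        (T \ nbr c r p).card + P.card ≤ t - 1) →
      ∀ p ∈ P, ∀ w', w' ∉ P → w' ≠ p → p ∈ nbr c r w' := by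
    intro P hPcard hmissP p hp w' hw' hwp
    rw [← nbr_comm]
    by_contra hno
    have hmem : w' ∈ ({w'} : Finset (Fin (2*t-1))) \ nbr c r p :=
      Finset.mem_sdiff.mpr ⟨Finset.mem_singleton_self _, hno⟩
    have hps : 0 < (({w'} : Finset (Fin (2*t-1))) \ nbr c r p).card :=
      Finset.card_pos.mpr ⟨w', hmem⟩
    have hcon := hmissP p hp {w'} (by
      intro u hu
      rw [Finset.mem_singleton] at hu
      subst hu
      exact ⟨hw', hwp⟩)
    omega
  have hYw : ∀ w', w' ∉ Y → Y ⊆ nbr c r w' := by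
    intro w' hw' y hy
    exact hfulladj Y hYfull hmissY y hy w' hw' (fun h => hw' (h ▸ hy))
  -- W
  set W := Finset.univ \ (X ∪ Y) with hW
  have hWm : ∀ w' ∈ W, w' ∉ X ∧ w' ∉ Y := by
    intro w' hw'
    have := Finset.mem_sdiff.mp hw'
    simp only [Finset.mem_union] at this
    tauto
  have hWcard : W.card + (X.card + Y.card) = 2*t - 1 := by
    have hdisj : Disjoint X Y := Finset.disjoint_left.mpr hdXY
    have h1 : (X ∪ Y).card = X.card + Y.card := Finset.card_union_of_disjoint hdisj
    have h2 := Finset.card_sdiff_add_card_eq_card (Finset.subset_univ (X ∪ Y))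
    rw [← hW] at h2
    have huniv : (Finset.univ : Finset (Fin (2*t-1))).card = 2*t-1 := Finset.card_fin _
    omega
  -- find a good center w
  have hgoodw : ∃ w', (w' ∉ X ∧ w' ∉ Y) ∧ 2 ≤ (X ∩ nbr c r w').card := by
    have hXsplit : X.card = t - 1 ∨ X.card = t - 2 := by omega
    rcases hXsplit with hXf | hXf
    · obtain ⟨w', hw'⟩ := Finset.card_pos.mp (show 0 < W.card by omega)
      obtain ⟨hwX, hwY⟩ := hWm w' hw'
      have hsub : X ⊆ X ∩ nbr c r w' := by
        intro x hx
        exact Finset.mem_inter.mpr ⟨hx,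
          hfulladj X hXf hmissX x hx w' hwX (fun h => hwX (h ▸ hx))⟩
      have := Finset.card_le_card hsub
      exact ⟨w', ⟨hwX, hwY⟩, by omega⟩
    · have hW2 : W.card = 2 := by omega
      obtain ⟨w1, w2, hw12, hWeq⟩ := Finset.card_eq_two.mp hW2
      have hw1W : w1 ∈ W := by rw [hWeq]; simp
      have hw2W : w2 ∈ W := by rw [hWeq]; simp
      have hcover : X ⊆ (X ∩ nbr c r w1) ∪ (X ∩ nbr c r w2) := by
        intro x hx
        by_contra hno
        simp only [Finset.mem_union, Finset.mem_inter] at hno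
        push_neg at hno
        have hn1 : w1 ∉ nbr c r x := fun h => (hno.1 hx) (nbr_comm.mp h)
        have hn2 : w2 ∉ nbr c r x := fun h => (hno.2 hx) (nbr_comm.mp h)
        have hsub2 : ({w1, w2} : Finset (Fin (2*t-1))) ⊆ ({w1, w2} : Finset (Fin (2*t-1))) \ nbr c r x := by
          intro u hu
          refine Finset.mem_sdiff.mpr ⟨hu, ?_⟩
          rcases Finset.mem_insert.mp hu with h | h
          · exact h ▸ hn1
          · exact (Finset.mem_singleton.mp h) ▸ hn2
        have hc2 : ({w1, w2} : Finset (Fin (2*t-1))).card = 2 := by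
          rw [Finset.card_insert_of_notMem (by simp [hw12]), Finset.card_singleton]
        have hge := Finset.card_le_card hsub2
        have hcon := hmissX x hx {w1, w2} (by
          intro u hu
          rcases Finset.mem_insert.mp hu with h | h
          · rw [h]
            exact ⟨(hWm w1 hw1W).1, fun h' => (hWm w1 hw1W).1 (h' ▸ hx)⟩
          · rw [Finset.mem_singleton.mp h]
            exact ⟨(hWm w2 hw2W).1, fun h' => (hWm w2 hw2W).1 (h' ▸ hx)⟩)
        omega
      have hcu := Finset.card_le_card hcover
      have hclee := Finset.card_union_le (X ∩ nbr c r w1) (X ∩ nbr c r w2)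
      have : 2 ≤ (X ∩ nbr c r w1).card ∨ 2 ≤ (X ∩ nbr c r w2).card := by omega
      rcases this with h | h
      · exact ⟨w1, hWm w1 hw1W, h⟩
      · exact ⟨w2, hWm w2 hw2W, h⟩
  obtain ⟨w, ⟨hwX, hwY⟩, hw2⟩ := hgoodw
  have hYsub : Y ⊆ nbr c r w := hYw w hwY
  have hYint : Y ∩ nbr c r w = Y := Finset.inter_eq_left.mpr hYsub
  apply punch hnc ht X Y hdXY ?_ w ?_ hw2 ?_
  · intro p hp
    have hcon := hmissX p hp Y (by
      intro u hu
      exact ⟨hdYX u hu, fun h => hdXY p hp (h ▸ hu)⟩)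
    omega
  · have := Finset.card_le_card hYsub
    omega
  · rw [hYint]; omega

/-- endgame when both cliques have size exactly t-2. -/
lemma endgame_22 {c : Sym2 (Fin (2*t-1)) → Fin 2} {r : Fin 2}
    (hnc : ¬ HasMonoCopy (SGraph t 2) c) (ht : 7 ≤ t)
    (X Y : Finset (Fin (2*t-1)))
    (hdXY : ∀ x ∈ X, x ∉ Y)
    (hXf : X.card = t - 2) (hYf : Y.card = t - 2)
    (hmissX : ∀ x ∈ X, ∀ T : Finset (Fin (2*t-1)), (∀ u ∈ T, u ∉ X ∧ u ≠ x) →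
      (T \ nbr c r x).card + X.card ≤ t - 1)
    (hmissY : ∀ y ∈ Y, ∀ T : Finset (Fin (2*t-1)), (∀ u ∈ T, u ∉ Y ∧ u ≠ y) →
      (T \ nbr c r y).card + Y.card ≤ t - 1) : False := by
  have hdYX : ∀ y ∈ Y, y ∉ X := fun y hy hyX => hdXY y hyX hy
  set W := Finset.univ \ (X ∪ Y) with hW
  have hWm : ∀ w' ∈ W, w' ∉ X ∧ w' ∉ Y := by
    intro w' hw'
    have := Finset.mem_sdiff.mp hw'
    simp only [Finset.mem_union] at this
    tauto
  have hWcard : W.card + (X.card + Y.card) = 2*t - 1 := by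
    have hdisj : Disjoint X Y := Finset.disjoint_left.mpr hdXY
    have h1 : (X ∪ Y).card = X.card + Y.card := Finset.card_union_of_disjoint hdisj
    have h2 := Finset.card_sdiff_add_card_eq_card (Finset.subset_univ (X ∪ Y))
    rw [← hW] at h2
    have huniv : (Finset.univ : Finset (Fin (2*t-1))).card = 2*t-1 := Finset.card_fin _
    omega
  have hW3 : W.card = 3 := by omega
  obtain ⟨w1, w2, w3, h12, h13, h23, hWeq⟩ := Finset.card_eq_three.mp hW3
  have hw1W : w1 ∈ W := by rw [hWeq]; simp
  have hw2W : w2 ∈ W := by rw [hWeq]; simp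
  have hw3W : w3 ∈ W := by rw [hWeq]; simp
  -- generic pair lemmas
  have hpair : ∀ (P : Finset (Fin (2*t-1))), P.card = t - 2 →
      (∀ p ∈ P, ∀ T : Finset (Fin (2*t-1)), (∀ u ∈ T, u ∉ P ∧ u ≠ p) →
        (T \ nbr c r p).card + P.card ≤ t - 1) →
      ∀ x ∈ P, ∀ u v' : Fin (2*t-1), u ∉ P → v' ∉ P → u ≠ v' →
        u ∉ nbr c r x → v' ∉ nbr c r x → False := by
    intro P hPf hmissP x hx u v' hu hv huv hun hvn
    have hsub2 : ({u, v'} : Finset (Fin (2*t-1))) ⊆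
        ({u, v'} : Finset (Fin (2*t-1))) \ nbr c r x := by
      intro z hz
      refine Finset.mem_sdiff.mpr ⟨hz, ?_⟩
      rcases Finset.mem_insert.mp hz with h | h
      · exact h ▸ hun
      · exact (Finset.mem_singleton.mp h) ▸ hvn
    have hc2 : ({u, v'} : Finset (Fin (2*t-1))).card = 2 := by
      rw [Finset.card_insert_of_notMem (by simp [huv]), Finset.card_singleton]
    have hge := Finset.card_le_card hsub2
    have hcon := hmissP x hx {u, v'} (by
      intro z hz
      rcases Finset.mem_insert.mp hz with h | h
      · rw [h]; exact ⟨hu, fun h' => hu (h' ▸ hx)⟩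
      · rw [Finset.mem_singleton.mp h]; exact ⟨hv, fun h' => hv (h' ▸ hx)⟩)
    omega
  have hkey : ∀ (P : Finset (Fin (2*t-1))), P.card = t - 2 →
      (∀ p ∈ P, ∀ T : Finset (Fin (2*t-1)), (∀ u ∈ T, u ∉ P ∧ u ≠ p) →
        (T \ nbr c r p).card + P.card ≤ t - 1) →
      ∀ u v' : Fin (2*t-1), u ∉ P → v' ∉ P → u ≠ v' →
        (P ∩ nbr c r u).card ≤ 2 → t - 4 ≤ (P ∩ nbr c r v').card := by
    intro P hPf hmissP u v' hu hv huv hsmall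
    have hsub : P \ nbr c r u ⊆ P ∩ nbr c r v' := by
      intro x hx'
      obtain ⟨hxP, hxn⟩ := Finset.mem_sdiff.mp hx'
      refine Finset.mem_inter.mpr ⟨hxP, ?_⟩
      by_contra hno
      exact hpair P hPf hmissP x hxP u v' hu hv huv
        (fun h => hxn (nbr_comm.mp h)) (fun h => hno (nbr_comm.mp h))
    have h1 := Finset.card_le_card hsub
    have h2 := Finset.card_inter_add_card_sdiff P (nbr c r u)
    omega
  -- sums
  have hsum : ∀ (P : Finset (Fin (2*t-1))), P.card = t - 2 →
      (∀ p ∈ P, ∀ T : Finset (Fin (2*t-1)), (∀ u ∈ T, u ∉ P ∧ u ≠ p) →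
        (T \ nbr c r p).card + P.card ≤ t - 1) →
      (∀ i ∈ W, i ∉ P) →
      2 * (t - 2) ≤ (P ∩ nbr c r w1).card + (P ∩ nbr c r w2).card +
        (P ∩ nbr c r w3).card := by
    intro P hPf hmissP hWP
    have hd' : ∀ (u v' : Fin (2*t-1)), u ∈ W → v' ∈ W → u ≠ v' →
        Disjoint (P \ nbr c r u) (P \ nbr c r v') := by
      intro u v' hu hv huv
      rw [Finset.disjoint_left]
      intro x hx hx'
      obtain ⟨hxP, hxn⟩ := Finset.mem_sdiff.mp hx
      obtain ⟨_, hxn'⟩ := Finset.mem_sdiff.mp hx'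
      exact hpair P hPf hmissP x hxP u v' (hWP u hu) (hWP v' hv) huv
        (fun h => hxn (nbr_comm.mp h)) (fun h => hxn' (nbr_comm.mp h))
    have e1 := Finset.card_inter_add_card_sdiff P (nbr c r w1)
    have e2 := Finset.card_inter_add_card_sdiff P (nbr c r w2)
    have e3 := Finset.card_inter_add_card_sdiff P (nbr c r w3)
    have u12 : ((P \ nbr c r w1) ∪ (P \ nbr c r w2)).card =
        (P \ nbr c r w1).card + (P \ nbr c r w2).card :=
      Finset.card_union_of_disjoint (hd' w1 w2 hw1W hw2W h12)
    have u123 : (((P \ nbr c r w1) ∪ (P \ nbr c r w2)) ∪ (P \ nbr c r w3)).card =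
        ((P \ nbr c r w1) ∪ (P \ nbr c r w2)).card + (P \ nbr c r w3).card :=
      Finset.card_union_of_disjoint (Finset.disjoint_union_left.mpr
        ⟨hd' w1 w3 hw1W hw3W h13, hd' w2 w3 hw2W hw3W h23⟩)
    have hle : (((P \ nbr c r w1) ∪ (P \ nbr c r w2)) ∪ (P \ nbr c r w3)).card ≤ P.card := by
      apply Finset.card_le_card
      intro z hz
      rcases Finset.mem_union.mp hz with h | h
      · rcases Finset.mem_union.mp h with h' | h'
        · exact (Finset.mem_sdiff.mp h').1
        · exact (Finset.mem_sdiff.mp h').1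
      · exact (Finset.mem_sdiff.mp h).1
    omega
  have hWX : ∀ i ∈ W, i ∉ X := fun i hi => (hWm i hi).1
  have hWY : ∀ i ∈ W, i ∉ Y := fun i hi => (hWm i hi).2
  have hsumX := hsum X hXf hmissX hWX
  have hsumY := hsum Y hYf hmissY hWY
  -- caps
  have capX1 := Finset.card_le_card (Finset.inter_subset_left : X ∩ nbr c r w1 ⊆ X)
  have capX2 := Finset.card_le_card (Finset.inter_subset_left : X ∩ nbr c r w2 ⊆ X)
  have capX3 := Finset.card_le_card (Finset.inter_subset_left : X ∩ nbr c r w3 ⊆ X)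
  have capY1 := Finset.card_le_card (Finset.inter_subset_left : Y ∩ nbr c r w1 ⊆ Y)
  have capY2 := Finset.card_le_card (Finset.inter_subset_left : Y ∩ nbr c r w2 ⊆ Y)
  have capY3 := Finset.card_le_card (Finset.inter_subset_left : Y ∩ nbr c r w3 ⊆ Y)
  -- punch negations
  have hng : ∀ w' : Fin (2*t-1), 2 ≤ (X ∩ nbr c r w').card → 3 ≤ (Y ∩ nbr c r w').card →
      t - 1 ≤ (X ∩ nbr c r w').card + (Y ∩ nbr c r w').card → False := by
    intro w' p1 p2 p3
    apply punch hnc ht X Y hdXY ?_ w' ?_ p1 p2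
    · intro p hp
      have hcon := hmissX p hp Y (by
        intro u hu
        exact ⟨hdYX u hu, fun h => hdXY p hp (h ▸ hu)⟩)
      omega
    · have hdisj : Disjoint (X ∩ nbr c r w') (Y ∩ nbr c r w') := by
        rw [Finset.disjoint_left]
        intro z hz hz'
        exact hdXY z (Finset.mem_inter.mp hz).1 (Finset.mem_inter.mp hz').1
      have hsub : (X ∩ nbr c r w') ∪ (Y ∩ nbr c r w') ⊆ nbr c r w' := by
        intro z hz
        rcases Finset.mem_union.mp hz with h | h
        · exact (Finset.mem_inter.mp h).2
        · exact (Finset.mem_inter.mp h).2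
      have h1 := Finset.card_union_of_disjoint hdisj
      have h2 := Finset.card_le_card hsub
      omega
  have hbkey : ∀ u v', u ∈ W → v' ∈ W → u ≠ v' → (Y ∩ nbr c r u).card ≤ 2 →
      t - 4 ≤ (Y ∩ nbr c r v').card :=
    fun u v' hu hv huv h => hkey Y hYf hmissY u v' (hWY u hu) (hWY v' hv) huv h
  have hakey : ∀ u v', u ∈ W → v' ∈ W → u ≠ v' → (X ∩ nbr c r u).card ≤ 2 →
      t - 4 ≤ (X ∩ nbr c r v').card :=
    fun u v' hu hv huv h => hkey X hXf hmissX u v' (hWX u hu) (hWX v' hv) huv h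
  by_cases hb1 : (Y ∩ nbr c r w1).card ≤ 2
  · have k2 := hbkey w1 w2 hw1W hw2W h12 hb1
    have k3 := hbkey w1 w3 hw1W hw3W h13 hb1
    by_cases ha2 : 3 ≤ (X ∩ nbr c r w2).card
    · exact hng w2 (by omega) (by omega) (by omega)
    · have k4 := hakey w2 w3 hw2W hw3W h23 (by omega)
      exact hng w3 (by omega) (by omega) (by omega)
  · by_cases hb2 : (Y ∩ nbr c r w2).card ≤ 2
    · have k1 := hbkey w2 w1 hw2W hw1W h12.symm hb2
      have k3 := hbkey w2 w3 hw2W hw3W h23 hb2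
      by_cases ha1 : 3 ≤ (X ∩ nbr c r w1).card
      · exact hng w1 (by omega) (by omega) (by omega)
      · have k4 := hakey w1 w3 hw1W hw3W h13 (by omega)
        exact hng w3 (by omega) (by omega) (by omega)
    · by_cases hb3 : (Y ∩ nbr c r w3).card ≤ 2
      · have k1 := hbkey w3 w1 hw3W hw1W h13.symm hb3
        have k2 := hbkey w3 w2 hw3W hw2W h23.symm hb3
        by_cases ha1 : 3 ≤ (X ∩ nbr c r w1).card
        · exact hng w1 (by omega) (by omega) (by omega)
        · have k4 := hakey w1 w2 hw1W hw2W h12 (by omega)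
          exact hng w2 (by omega) (by omega) (by omega)
      · by_cases ha1 : (X ∩ nbr c r w1).card ≤ 2
        · have k2 := hakey w1 w2 hw1W hw2W h12 ha1
          exact hng w2 (by omega) (by omega) (by omega)
        · by_cases ha2 : (X ∩ nbr c r w2).card ≤ 2
          · have k1 := hakey w2 w1 hw2W hw1W h12.symm ha2
            exact hng w1 (by omega) (by omega) (by omega)
          · by_cases ha3 : (X ∩ nbr c r w3).card ≤ 2
            · have k1 := hakey w3 w1 hw3W hw1W h13.symm ha3
              exact hng w1 (by omega) (by omega) (by omega)
            · have s1 : (X ∩ nbr c r w1).card + (Y ∩ nbr c r w1).card ≤ t - 2 := by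
                by_contra h'
                exact hng w1 (by omega) (by omega) (by omega)
              have s2 : (X ∩ nbr c r w2).card + (Y ∩ nbr c r w2).card ≤ t - 2 := by
                by_contra h'
                exact hng w2 (by omega) (by omega) (by omega)
              have s3 : (X ∩ nbr c r w3).card + (Y ∩ nbr c r w3).card ≤ t - 2 := by
                by_contra h'
                exact hng w3 (by omega) (by omega) (by omega)
              omega

lemma upper (ht : 7 ≤ t) (c : Sym2 (Fin (2*t-1)) → Fin 2) : HasMonoCopy (SGraph t 2) c := by
  by_contra hnc
  have h01 : ((0 : Fin 2) ≠ 1) := by decide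
  have hbig : ∀ v : Fin (2*t-1), ∃ r b : Fin 2, r ≠ b ∧ t - 1 ≤ (nbr c r v).card := by
    intro v
    have := nbr_card_add (c := c) h01 v ht
    rcases le_or_gt (t-1) ((nbr c 0 v).card) with h | h
    · exact ⟨0, 1, h01, h⟩
    · exact ⟨1, 0, h01.symm, by omega⟩
  obtain ⟨k0, b0, hk0, hbig0⟩ := hbig ⟨0, by omega⟩
  obtain ⟨C0, hC0sub, hC0card, hC0clq⟩ := clique_of_big hnc ht hk0 _ hbig0
  have hC04 : 4 ≤ C0.card := by omega
  obtain ⟨d1, hd1, d2, hd2, d3, hd3, d4, hd4, e12, e13, e14, e23, e24, e34⟩ :=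
    exists_four hC04
  have hu0 : ∃ u0 : Fin (2*t-1), t ≤ (nbr c k0 u0).card := by
    by_contra hall
    push_neg at hall
    have hb : ∀ x : Fin (2*t-1), t - 1 ≤ (nbr c b0 x).card := by
      intro x
      have hh1 := nbr_card_add (c := c) hk0 x ht
      have hh2 := hall x
      omega
    exact k4_false hnc ht d1 d2 d3 d4 e12 e13 e14 e23 e24 e34
      (hC0clq d1 hd1 d2 hd2 e12) (hC0clq d1 hd1 d3 hd3 e13) (hC0clq d1 hd1 d4 hd4 e14)
      (hC0clq d2 hd2 d3 hd3 e23) (hC0clq d2 hd2 d4 hd4 e24) (hC0clq d3 hd3 d4 hd4 e34)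
      (hb d1) (hb d2) (hb d3) (hb d4)
  obtain ⟨u0, hu0⟩ := hu0
  obtain ⟨X, hXsub, hXcard, hXclq⟩ := clique_of_big hnc ht hk0 u0 (by omega)
  have hXc : t - 2 ≤ X.card := by omega
  -- generic miss bound for big cliques
  have hmissgen : ∀ P : Finset (Fin (2*t-1)), t - 2 ≤ P.card →
      (∀ x ∈ P, ∀ y ∈ P, x ≠ y → c s(x, y) = b0) →
      ∀ p ∈ P, ∀ T : Finset (Fin (2*t-1)), (∀ u ∈ T, u ∉ P ∧ u ≠ p) →
      (T \ nbr c k0 p).card + P.card ≤ t - 1 := by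
    intro P hPc hPclq p hp T hT
    have hsmall : (nbr c b0 p).card ≤ t - 2 :=
      clique_vertex_small hnc ht (by omega) hPclq hp
    have h1 : T \ nbr c k0 p ⊆ (nbr c b0 p) \ P := by
      intro u hu
      obtain ⟨huT, hun⟩ := Finset.mem_sdiff.mp hu
      obtain ⟨huP, hup⟩ := hT u huT
      refine Finset.mem_sdiff.mpr ⟨mem_nbr.mpr ⟨hup, ?_⟩, huP⟩
      exact other_color hk0 (fun h => hun (mem_nbr.mpr ⟨hup, h⟩))
    have h2 : P.erase p ⊆ nbr c b0 p := by
      intro y hy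
      obtain ⟨hyne, hyP⟩ := Finset.mem_erase.mp hy
      exact mem_nbr.mpr ⟨hyne, hPclq p hp y hyP (Ne.symm hyne)⟩
    have h3 : Disjoint ((nbr c b0 p) \ P) (P.erase p) := by
      rw [Finset.disjoint_left]
      intro u hu hu'
      exact (Finset.mem_sdiff.mp hu).2 (Finset.mem_erase.mp hu').2
    have h4 : ((nbr c b0 p) \ P) ∪ (P.erase p) ⊆ nbr c b0 p := by
      intro u hu
      rcases Finset.mem_union.mp hu with h | h
      · exact (Finset.mem_sdiff.mp h).1
      · exact h2 h
    have h5 := Finset.card_union_of_disjoint h3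
    have h6 := Finset.card_le_card h4
    have h7 := Finset.card_le_card h1
    have h8 := Finset.card_erase_of_mem hp
    have h9 : 0 < P.card := by omega
    omega
  have hmissX := hmissgen X hXc hXclq
  have hXle : X.card ≤ t - 1 := clique_card_le hnc ht hXclq
  obtain ⟨u1, hu1⟩ := Finset.card_pos.mp (show 0 < X.card by omega)
  have hu1big : t ≤ (nbr c k0 u1).card := by
    have hh1 := nbr_card_add (c := c) hk0 u1 ht
    have hh2 := clique_vertex_small hnc ht (show 5 ≤ X.card by omega) hXclq hu1
    omega
  obtain ⟨Y, hYsub, hYcard, hYclq⟩ := clique_of_big hnc ht hk0 u1 (by omega)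
  have hYc : t - 2 ≤ Y.card := by omega
  have hYle : Y.card ≤ t - 1 := clique_card_le hnc ht hYclq
  have hmissY := hmissgen Y hYc hYclq
  have hdXY : ∀ x ∈ X, x ∉ Y := by
    intro x hx hxY
    have hxu1 : x ≠ u1 := (mem_nbr.mp (hYsub hxY)).1
    have hh1 : c s(u1, x) = k0 := (mem_nbr.mp (hYsub hxY)).2
    have hh2 : c s(u1, x) = b0 := hXclq u1 hu1 x hx (Ne.symm hxu1)
    exact hk0 (hh1.symm.trans hh2)
  have hcase : Y.card = t-1 ∨ X.card = t-1 ∨ (X.card = t-2 ∧ Y.card = t-2) := by omega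
  rcases hcase with h | h | ⟨hh1, hh2⟩
  · exact endgame_full hnc ht X Y hdXY hXc hXle hYle hmissX hmissY h
  · have hdYX : ∀ y ∈ Y, y ∉ X := fun y hy hyX => hdXY y hyX hy
    exact endgame_full hnc ht Y X hdYX hYc hYle hXle hmissY hmissX h
  · exact endgame_22 hnc ht X Y hdXY hh1 hh2 hmissX hmissY

lemma lower (ht : 7 ≤ t) : ∃ c : Sym2 (Fin (2*t-2)) → Fin 2, ¬ HasMonoCopy (SGraph t 2) c := by
  refine ⟨Sym2.lift ⟨fun a b => if ((a.val < t-1) ↔ (b.val < t-1)) then 0 else 1, ?_⟩, ?_⟩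
  · intro a b
    simp only
    by_cases h : (a.val < t-1 ↔ b.val < t-1)
    · rw [if_pos h, if_pos h.symm]
    · rw [if_neg h, if_neg (fun h' => h h'.symm)]
  · rintro ⟨f, col, hcol⟩
    set i0 : Fin t := ⟨0, by omega⟩ with hi0
    set i1 : Fin t := ⟨1, by omega⟩ with hi1
    set i2 : Fin t := ⟨2, by omega⟩ with hi2
    have hadj0 : ∀ j : Fin t, j ≠ i0 → (SGraph t 2).Adj i0 j := by
      intro j hj
      rw [SGraph, SimpleGraph.fromRel_adj]
      exact ⟨Ne.symm hj, Or.inl (Or.inl rfl)⟩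
    have hadj12 : (SGraph t 2).Adj i1 i2 := by
      rw [SGraph, SimpleGraph.fromRel_adj]
      exact ⟨Fin.ne_of_val_ne (by norm_num), Or.inl (Or.inr ⟨rfl, rfl, by norm_num⟩)⟩
    have hne01 : i1 ≠ i0 := Fin.ne_of_val_ne (by norm_num)
    have hne02 : i2 ≠ i0 := Fin.ne_of_val_ne (by norm_num)
    by_cases hc0 : col = 0
    · -- red copy: all star edges inside one part of size t-1, impossible
      subst hc0
      have hside : ∀ j : Fin t, ((f j).val < t-1 ↔ (f i0).val < t-1) := by
        intro j
        by_cases hj : j = i0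
        · rw [hj]
        · have h := hcol i0 j (hadj0 j hj)
          simp only [Sym2.lift_mk] at h
          by_cases hcnd : ((f i0).val < t-1 ↔ (f j).val < t-1)
          · exact hcnd.symm
          · rw [if_neg hcnd] at h
            exact absurd h (by decide)
      set g : Fin t → Fin (t-1) := fun j =>
        if h : (f i0).val < t-1 then
          ⟨(f j).val, by have := hside j; omega⟩
        else
          ⟨(f j).val - (t-1), by
            have h1 := (f j).isLt
            have h2 := hside j
            omega⟩ with hg
      have hginj : Function.Injective g := by
        intro x y hxy
        apply f.injective
        apply Fin.ext
        by_cases h : (f i0).val < t-1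
        · rw [hg] at hxy
          simp only [dif_pos h, Fin.mk.injEq] at hxy
          exact hxy
        · rw [hg] at hxy
          simp only [dif_neg h, Fin.mk.injEq] at hxy
          have hx := hside x
          have hy := hside y
          omega
      have hcard := Fintype.card_le_of_injective g hginj
      simp only [Fintype.card_fin] at hcard
      omega
    · -- blue copy: would contain a blue triangle, but blue is bipartite
      have hc1 : col = 1 := by
        fin_cases col
        · exact absurd rfl hc0
        · rfl
      subst hc1
      have hval : ∀ x y : Fin t, (SGraph t 2).Adj x y →
          ¬((f x).val < t-1 ↔ (f y).val < t-1) := by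
        intro x y hadj hcnd
        have h := hcol x y hadj
        simp only [Sym2.lift_mk] at h
        rw [if_pos hcnd] at h
        exact absurd h (by decide)
      have h1 := hval i0 i1 (hadj0 i1 hne01)
      have h2 := hval i0 i2 (hadj0 i2 hne02)
      have h3 := hval i1 i2 hadj12
      tauto

end RamseyAux

theorem ramsey_St2 (t : ℕ) (ht : 7 ≤ t) :
    (∀ c : Sym2 (Fin (2 * t - 1)) → Fin 2, HasMonoCopy (SGraph t 2) c) ∧
    (∃ c : Sym2 (Fin (2 * t - 2)) → Fin 2, ¬ HasMonoCopy (SGraph t 2) c) := by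
  exact ⟨fun c => RamseyAux.upper ht c, RamseyAux.lower ht⟩
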